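/- Let G be a countable discrete group, Σ = (σ_n : G → Sym(V_n)) a sofic approximation to G, A and B finite sets, μ a G-process on A^G, and (μ_n) a sequence of probability measures on A^{V_n} that locally weak* converges to μ over Σ. Let (φ_m : A^G → B)_{m=1}^∞ be a sequence of local observables (each φ_m is F_m-local for some finite F_m ⊆ G) and let φ : A^G → B be a local observable. Let c > 0 and let S_n ⊆ V_n be sets with |S_n| ≥ c·|V_n| for all n. Then there exists a nondecreasing sequence (m_n)_{n=1}^∞ of positive integers with m_n → ∞ such that for every ε > 0, for all sufficiently large n: (1/|S_n|)·| H(π_{S_n*}(φ^{σ_n})_* μ_n) − H(π_{S_n*}(φ_{m_n}^{σ_n})_* μ_n) | ≤ d^Rok_μ(φ,φ_{m_n}) + ε. -/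

import Mathlib

open MeasureTheory Filter

/-- Shannon entropy of a measure on a finite set, with the convention `0 * log 0 = 0`. -/
noncomputable def shannonEntropy {D : Type*} [Fintype D] [MeasurableSpace D]
    (η : Measure D) : ℝ :=
  -∑ d : D, (η {d}).toReal * Real.log (η {d}).toReal

/-- Shannon entropy `H_μ(α)` of a finite-valued observable: the entropy of the
pushforward measure `α_* μ`. -/
noncomputable def obsEntropy {X D : Type*} [MeasurableSpace X] [Fintype D] [MeasurableSpace D]
    (μ : Measure X) (α : X → D) : ℝ :=
  shannonEntropy (Measure.map α μ)

/-- Conditional Shannon entropy `H_μ(α | β) = H_μ((α,β)) - H_μ(β)`. -/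
noncomputable def condEntropyObs {X D E : Type*} [MeasurableSpace X]
    [Fintype D] [MeasurableSpace D] [Fintype E] [MeasurableSpace E]
    (μ : Measure X) (α : X → D) (β : X → E) : ℝ :=
  obsEntropy μ (fun x => (α x, β x)) - obsEntropy μ β

/-- The Rokhlin distance `d^Rok_μ(α, β) = H_μ(α|β) + H_μ(β|α)`. -/
noncomputable def rokDist {X D E : Type*} [MeasurableSpace X]
    [Fintype D] [MeasurableSpace D] [Fintype E] [MeasurableSpace E]
    (μ : Measure X) (α : X → D) (β : X → E) : ℝ :=
  condEntropyObs μ α β + condEntropyObs μ β α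

/-- `σ = (σ_n : G → Sym(V_n))` is a sofic approximation to `G`. -/
def IsSoficApprox {G : Type*} [Group G] {V : ℕ → Type*} [∀ n, Fintype (V n)]
    (σ : ∀ n, G → Equiv.Perm (V n)) : Prop :=
  Tendsto (fun n => Fintype.card (V n)) atTop atTop ∧
    (∀ g h : G,
      Tendsto (fun n =>
          (Nat.card {v : V n // σ n g (σ n h v) = σ n (g * h) v} : ℝ) /
            (Fintype.card (V n) : ℝ)) atTop (nhds 1)) ∧
    (∀ g : G, g ≠ 1 →
      Tendsto (fun n =>
          (Nat.card {v : V n // σ n g v = v} : ℝ) / (Fintype.card (V n) : ℝ))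
        atTop (nhds 0))

/-- Total variation distance between two measures on a finite set. -/
noncomputable def tvDist {D : Type*} [Fintype D] [MeasurableSpace D]
    (η₁ η₂ : Measure D) : ℝ :=
  (∑ d : D, |(η₁ {d}).toReal - (η₂ {d}).toReal|) / 2

/-- The sequence of measures `μn n` on `V n → A` locally weak* converges over the sofic
approximation `σ` to the measure `μ` on `A^G`: for every finite `F ⊆ G` and `δ > 0`,
eventually at least `(1-δ)|V_n|` of the `v ∈ V_n` satisfy
`‖(Π^{σ_n}_{v,F})_* μ_n − μ_F‖_TV < δ`. -/
def LocalWeakStarConverges {G : Type*} [Group G] [DecidableEq G] {V : ℕ → Type*}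
    [∀ n, Fintype (V n)] {A : Type*} [Fintype A] [MeasurableSpace A]
    (σ : ∀ n, G → Equiv.Perm (V n)) (μn : ∀ n, Measure (V n → A))
    (μ : Measure (G → A)) : Prop :=
  ∀ (F : Finset G) (δ : ℝ), 0 < δ → ∀ᶠ n in atTop,
    ((1 - δ) * (Fintype.card (V n) : ℝ)) ≤
      (Nat.card {v : V n //
        tvDist (Measure.map (fun (x : V n → A) (g : ↥F) => x (σ n g.1 v)) (μn n))
          (Measure.map (fun (a : G → A) (g : ↥F) => a g.1) μ) < δ} : ℝ)

set_option linter.unusedSectionVars false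
set_option maxHeartbeats 1000000

section FiniteEntropy
open Finset Real
variable {X : Type*} [Fintype X] {D : Type*} [Fintype D] {E : Type*} [Fintype E]
  {K : Type*} [Fintype K]

open scoped Classical in
noncomputable def pushp (p : X → ℝ) (f : X → D) (d : D) : ℝ :=
  ∑ x, if f x = d then p x else 0

noncomputable def entv (q : D → ℝ) : ℝ := ∑ d, Real.negMulLog (q d)

noncomputable def fent (p : X → ℝ) (f : X → D) : ℝ := entv (pushp p f)

noncomputable def fcond (p : X → ℝ) (f : X → D) (g : X → E) : ℝ :=
  fent p (fun x => (f x, g x)) - fent p g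

variable {p : X → ℝ}

lemma pushp_nonneg (hp : ∀ x, 0 ≤ p x) (f : X → D) (d : D) : 0 ≤ pushp p f d := by
  classical
  exact Finset.sum_nonneg fun x _ => by split <;> simp [hp x]

lemma sum_pushp_mul (f : X → D) (T : D → ℝ) :
    ∑ d, pushp p f d * T d = ∑ x, p x * T (f x) := by
  classical
  unfold pushp
  simp only [Finset.sum_mul]
  rw [Finset.sum_comm]
  refine Finset.sum_congr rfl fun x _ => ?_
  simp [ite_mul, Finset.sum_ite_eq]

lemma sum_pushp (f : X → D) : ∑ d, pushp p f d = ∑ x, p x := by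
  have := sum_pushp_mul (p := p) f (fun _ => (1 : ℝ))
  simpa using this

lemma pushp_apply_le (hp : ∀ x, 0 ≤ p x) (f : X → D) (x : X) : p x ≤ pushp p f (f x) := by
  classical
  unfold pushp
  have : p x = if f x = f x then p x else 0 := by simp
  rw [this]
  refine Finset.single_le_sum (f := fun y => if f y = f x then p y else 0)
    (fun y _ => by split <;> simp [hp y]) (Finset.mem_univ x)

lemma pushp_comp (f : X → D) (r : D → K) (k : K) :
    pushp p (fun x => r (f x)) k = pushp (pushp p f) r k := by
  classical
  have : pushp (pushp p f) r k = ∑ d, pushp p f d * (if r d = k then (1:ℝ) else 0) := by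
    unfold pushp
    refine Finset.sum_congr rfl fun d _ => ?_
    split <;> simp
  rw [this, sum_pushp_mul]
  unfold pushp
  refine Finset.sum_congr rfl fun x _ => ?_
  split <;> simp

lemma fent_eq_sum_x (f : X → D) : fent p f = ∑ x, p x * (-Real.log (pushp p f (f x))) := by
  unfold fent entv
  rw [← sum_pushp_mul f (fun d => -Real.log (pushp p f d))]
  refine Finset.sum_congr rfl fun d _ => ?_
  rw [Real.negMulLog]
  ring

lemma sum_pushp_pair_right (f : X → D) (g : X → E) (e : E) :
    ∑ d, pushp p (fun x => (f x, g x)) (d, e) = pushp p g e := by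
  classical
  unfold pushp
  rw [Finset.sum_comm]
  refine Finset.sum_congr rfl fun x _ => ?_
  by_cases h : g x = e
  · simp [h, Prod.ext_iff, Finset.sum_ite_eq]
  · simp [h, Prod.ext_iff]

lemma sum_pushp_pair_left (f : X → D) (g : X → E) (d : D) :
    ∑ e, pushp p (fun x => (f x, g x)) (d, e) = pushp p f d := by
  classical
  unfold pushp
  rw [Finset.sum_comm]
  refine Finset.sum_congr rfl fun x _ => ?_
  by_cases h : f x = d
  · simp [h, Prod.ext_iff, Finset.sum_ite_eq]
  · simp [h, Prod.ext_iff]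

lemma negMulLog_sum_le {ι : Type*} (s : Finset ι) (a : ι → ℝ) (ha : ∀ i ∈ s, 0 ≤ a i) :
    Real.negMulLog (∑ i ∈ s, a i) ≤ ∑ i ∈ s, Real.negMulLog (a i) := by
  have h1 : Real.negMulLog (∑ i ∈ s, a i) = ∑ i ∈ s, a i * (-Real.log (∑ j ∈ s, a j)) := by
    rw [← Finset.sum_mul, Real.negMulLog]; ring
  rw [h1]
  refine Finset.sum_le_sum fun i hi => ?_
  rcases eq_or_lt_of_le (ha i hi) with h | h
  · simp [Real.negMulLog, ← h]
  · have hle : a i ≤ ∑ j ∈ s, a j := Finset.single_le_sum (fun j hj => ha j hj) hi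
    have hll : Real.log (a i) ≤ Real.log (∑ j ∈ s, a j) := Real.log_le_log h hle
    have := mul_le_mul_of_nonneg_left (neg_le_neg hll) (le_of_lt h)
    simpa [Real.negMulLog, mul_comm] using this

/-- coarsening decreases entropy -/
lemma fent_comp_le (hp : ∀ x, 0 ≤ p x) (f : X → D) (r : D → K) :
    fent p (fun x => r (f x)) ≤ fent p f := by
  classical
  unfold fent entv
  calc ∑ k, Real.negMulLog (pushp p (fun x => r (f x)) k)
      = ∑ k, Real.negMulLog (pushp (pushp p f) r k) :=
        Finset.sum_congr rfl fun k _ => by rw [pushp_comp]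
    _ ≤ ∑ k, ∑ d, Real.negMulLog (if r d = k then pushp p f d else 0) := by
        refine Finset.sum_le_sum fun k _ => ?_
        unfold pushp
        refine negMulLog_sum_le _ _ (fun d _ => ?_)
        split
        · exact pushp_nonneg hp f d
        · exact le_refl 0

    _ = ∑ k, ∑ d, (if r d = k then Real.negMulLog (pushp p f d) else 0) := by
        refine Finset.sum_congr rfl fun k _ => Finset.sum_congr rfl fun d _ => ?_
        split <;> simp
    _ = ∑ d, Real.negMulLog (pushp p f d) := by
        rw [Finset.sum_comm]
        exact Finset.sum_congr rfl fun d _ => by simp [Finset.sum_ite_eq]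

/-- entropy depends only on the induced partition -/
lemma fent_congr (hp : ∀ x, 0 ≤ p x) (hne : Nonempty X) {f : X → D} {g : X → E}
    (h : ∀ x y, f x = f y ↔ g x = g y) : fent p f = fent p g := by
  classical
  have hE : Nonempty E := ⟨g hne.some⟩
  have hD : Nonempty D := ⟨f hne.some⟩
  set e : D → E := fun d => if hx : ∃ x, f x = d then g hx.choose else Classical.arbitrary E
    with he
  set e' : E → D := fun k => if hx : ∃ x, g x = k then f hx.choose else Classical.arbitrary D
    with he'
  have hge : ∀ x, g x = e (f x) := by
    intro x
    have hx : ∃ y, f y = f x := ⟨x, rfl⟩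
    simp only [he, dif_pos hx]
    exact ((h _ _).mp hx.choose_spec).symm
  have hfe : ∀ x, f x = e' (g x) := by
    intro x
    have hx : ∃ y, g y = g x := ⟨x, rfl⟩
    simp only [he', dif_pos hx]
    exact ((h _ _).mpr hx.choose_spec).symm
  have h1 : fent p g ≤ fent p f := by
    calc fent p g = fent p (fun x => e (f x)) := by simp only [← hge]
      _ ≤ fent p f := fent_comp_le hp f e
  have h2 : fent p f ≤ fent p g := by
    calc fent p f = fent p (fun x => e' (g x)) := by simp only [← hfe]
      _ ≤ fent p g := fent_comp_le hp g e'
  linarith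

lemma jensen_log {ι : Type*} (s : Finset ι) (w t : ι → ℝ) (hw : ∀ i ∈ s, 0 ≤ w i)
    (hw1 : ∑ i ∈ s, w i = 1) (ht : ∀ i ∈ s, 0 ≤ t i) (hwt : ∀ i ∈ s, 0 < w i → 0 < t i) :
    ∑ i ∈ s, w i * Real.log (t i) ≤ Real.log (∑ i ∈ s, w i * t i) := by
  set c := ∑ i ∈ s, w i * t i with hc
  obtain ⟨i0, hi0, hwi0⟩ : ∃ i ∈ s, 0 < w i := by
    by_contra hcon
    push_neg at hcon
    have : ∑ i ∈ s, w i = 0 := Finset.sum_eq_zero fun i hi => le_antisymm (hcon i hi) (hw i hi)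
    rw [hw1] at this; norm_num at this
  have hcpos : 0 < c := by
    have h1 : 0 < w i0 * t i0 := mul_pos hwi0 (hwt i0 hi0 hwi0)
    exact lt_of_lt_of_le h1 (Finset.single_le_sum
      (fun i hi => mul_nonneg (hw i hi) (ht i hi)) hi0)
  have key : ∀ i ∈ s, w i * Real.log (t i) ≤ w i * Real.log c + (w i * t i) / c - w i := by
    intro i hi
    rcases eq_or_lt_of_le (hw i hi) with h | h
    · rw [← h]; simp
    · have htpos : 0 < t i := hwt i hi h
      have hl : Real.log (t i / c) ≤ t i / c - 1 := Real.log_le_sub_one_of_pos (by positivity)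
      rw [Real.log_div (ne_of_gt htpos) (ne_of_gt hcpos)] at hl
      have h2 := mul_le_mul_of_nonneg_left hl (le_of_lt h)
      have h3 : w i * (t i / c - 1) = (w i * t i) / c - w i := by ring
      nlinarith
  calc ∑ i ∈ s, w i * Real.log (t i) ≤ ∑ i ∈ s, (w i * Real.log c + (w i * t i) / c - w i) :=
        Finset.sum_le_sum key
    _ = (∑ i ∈ s, w i) * Real.log c + (∑ i ∈ s, w i * t i) / c - ∑ i ∈ s, w i := by
        rw [Finset.sum_sub_distrib, Finset.sum_add_distrib, ← Finset.sum_mul, ← Finset.sum_div]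
    _ = Real.log c := by rw [hw1, ← hc]; field_simp; ring


/-- conditioning on a coarsening increases conditional entropy -/
lemma fcond_comp_le (hp : ∀ x, 0 ≤ p x) (hp1 : ∑ x, p x = 1) (f : X → D) (g : X → E)
    (r : E → K) : fcond p f g ≤ fcond p f (fun x => r (g x)) := by
  classical
  set Pfg : D × E → ℝ := pushp p (fun x => (f x, g x)) with hPfg
  set Pg : E → ℝ := pushp p g with hPg
  set Pfr : D × K → ℝ := pushp p (fun x => (f x, r (g x))) with hPfr
  set Pr : K → ℝ := pushp p (fun x => r (g x)) with hPr
  set T : D × E → ℝ := fun z => (Pfr (z.1, r z.2) * Pg z.2) / (Pfg z * Pr (r z.2)) with hTdef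
  set t : X → ℝ := fun x => T (f x, g x) with hT
  set s : Finset X := Finset.univ.filter (fun x => 0 < p x) with hsdef
  have hs : ∀ (F : X → ℝ), ∑ x, p x * F x = ∑ x ∈ s, p x * F x := by
    intro F
    refine (Finset.sum_subset (Finset.subset_univ s) (fun x _ hx => ?_)).symm
    have : p x = 0 := le_antisymm (not_lt.mp (by simpa [hsdef] using hx)) (hp x)
    simp [this]
  have hw1 : ∑ x ∈ s, p x = 1 := by
    have h := hs (fun _ => 1)
    simp only [mul_one] at h
    rw [← h, hp1]
  have htnn : ∀ x, 0 ≤ t x := fun x => div_nonneg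
    (mul_nonneg (pushp_nonneg hp _ _) (pushp_nonneg hp _ _))
    (mul_nonneg (pushp_nonneg hp _ _) (pushp_nonneg hp _ _))
  have hpos : ∀ x ∈ s, 0 < p x := fun x hx => by simpa [hsdef] using hx
  have h1 : ∀ x ∈ s, 0 < Pfg (f x, g x) := fun x hx =>
    lt_of_lt_of_le (hpos x hx) (pushp_apply_le hp (fun x => (f x, g x)) x)
  have h2 : ∀ x ∈ s, 0 < Pg (g x) := fun x hx =>
    lt_of_lt_of_le (hpos x hx) (pushp_apply_le hp g x)
  have h3 : ∀ x ∈ s, 0 < Pfr (f x, r (g x)) := fun x hx =>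
    lt_of_lt_of_le (hpos x hx) (pushp_apply_le hp (fun x => (f x, r (g x))) x)
  have h4 : ∀ x ∈ s, 0 < Pr (r (g x)) := fun x hx =>
    lt_of_lt_of_le (hpos x hx) (pushp_apply_le hp (fun x => r (g x)) x)
  have hbound : ∑ x ∈ s, p x * t x ≤ 1 := by
    have stepa : ∑ x ∈ s, p x * t x ≤ ∑ x, p x * t x :=
      Finset.sum_le_sum_of_subset_of_nonneg (Finset.subset_univ s)
        (fun x _ _ => mul_nonneg (hp x) (htnn x))
    have stepb : ∑ x, p x * t x = ∑ z : D × E, Pfg z * T z := by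
      rw [hPfg, sum_pushp_mul (fun x => (f x, g x)) T]
    have stepd : ∀ z : D × E, Pfg z * T z ≤ (Pg z.2 / Pr (r z.2)) * Pfr (z.1, r z.2) := by
      intro z
      rw [hTdef]
      rcases eq_or_ne (Pr (r z.2)) 0 with hz | hz
      · simp [hz]
      rcases eq_or_ne (Pfg z) 0 with hz2 | hz2
      · rw [hz2]
        simp only [zero_mul]
        exact mul_nonneg (div_nonneg (pushp_nonneg hp _ _) (pushp_nonneg hp _ _))
          (pushp_nonneg hp _ _)
      · refine le_of_eq ?_
        field_simp
    have stepe : ∑ z : D × E, (Pg z.2 / Pr (r z.2)) * Pfr (z.1, r z.2) ≤ 1 := by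
      have heq : ∑ z : D × E, (Pg z.2 / Pr (r z.2)) * Pfr (z.1, r z.2)
          = ∑ e : E, (Pg e / Pr (r e)) * Pr (r e) := by
        rw [Fintype.sum_prod_type, Finset.sum_comm]
        refine Finset.sum_congr rfl fun e _ => ?_
        simp only
        rw [← Finset.mul_sum]
        congr 1
        exact sum_pushp_pair_right f (fun x => r (g x)) (r e)
      rw [heq]
      have hle : ∀ e : E, (Pg e / Pr (r e)) * Pr (r e) ≤ Pg e := by
        intro e
        rcases eq_or_ne (Pr (r e)) 0 with hz | hz
        · rw [hz]; simpa using pushp_nonneg hp g e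
        · rw [div_mul_cancel₀ _ hz]
      calc ∑ e, (Pg e / Pr (r e)) * Pr (r e) ≤ ∑ e, Pg e := Finset.sum_le_sum fun e _ => hle e
        _ = 1 := by rw [hPg, sum_pushp, hp1]
    calc ∑ x ∈ s, p x * t x ≤ ∑ x, p x * t x := stepa
      _ = ∑ z : D × E, Pfg z * T z := stepb
      _ ≤ ∑ z : D × E, (Pg z.2 / Pr (r z.2)) * Pfr (z.1, r z.2) :=
          Finset.sum_le_sum fun z _ => stepd z
      _ ≤ 1 := stepe
  have hjen : ∑ x ∈ s, p x * Real.log (t x) ≤ 0 := by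
    have hj := jensen_log s p t (fun x _ => hp x) hw1 (fun x _ => htnn x)
      (fun x hx _ => div_pos (mul_pos (h3 x hx) (h2 x hx)) (mul_pos (h1 x hx) (h4 x hx)))
    have hlog : Real.log (∑ x ∈ s, p x * t x) ≤ 0 :=
      Real.log_nonpos (Finset.sum_nonneg fun x _ => mul_nonneg (hp x) (htnn x)) hbound
    linarith
  have hdiff : fcond p f g - fcond p f (fun x => r (g x)) = ∑ x ∈ s, p x * Real.log (t x) := by
    unfold fcond
    rw [fent_eq_sum_x (fun x => (f x, g x)), fent_eq_sum_x g,
      fent_eq_sum_x (fun x => (f x, r (g x))), fent_eq_sum_x (fun x => r (g x))]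
    rw [hs (fun x => -Real.log (pushp p (fun x => (f x, g x)) (f x, g x))),
      hs (fun x => -Real.log (pushp p g (g x))),
      hs (fun x => -Real.log (pushp p (fun x => (f x, r (g x))) (f x, r (g x)))),
      hs (fun x => -Real.log (pushp p (fun x => r (g x)) (r (g x))))]
    rw [← Finset.sum_sub_distrib, ← Finset.sum_sub_distrib, ← Finset.sum_sub_distrib]
    refine Finset.sum_congr rfl fun x hx => ?_
    have e1 := h1 x hx
    have e2 := h2 x hx
    have e3 := h3 x hx
    have e4 := h4 x hx
    have hlt : Real.log (t x) = Real.log (Pfr (f x, r (g x))) + Real.log (Pg (g x))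
        - (Real.log (Pfg (f x, g x)) + Real.log (Pr (r (g x)))) := by
      rw [hT, hTdef]
      simp only
      rw [Real.log_div (by positivity) (by positivity), Real.log_mul (ne_of_gt e3) (ne_of_gt e2),
        Real.log_mul (ne_of_gt e1) (ne_of_gt e4)]
    rw [hlt, ← hPfg, ← hPg, ← hPfr, ← hPr]
    ring
  linarith

/-- conditional entropy is at most unconditional entropy -/
lemma fcond_le_fent (hp : ∀ x, 0 ≤ p x) (hp1 : ∑ x, p x = 1) (f : X → D) (g : X → E) :
    fcond p f g ≤ fent p f := by
  classical
  have h := fcond_comp_le hp hp1 f g (fun _ => (0 : Fin 1))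
  have h2 : fcond p f (fun _ => (0 : Fin 1)) = fent p f := by
    unfold fcond
    have hne : Nonempty X := by
      by_contra hcon
      rw [not_nonempty_iff] at hcon
      rw [Finset.univ_eq_empty, Finset.sum_empty] at hp1
      norm_num at hp1
    have e1 : fent p (fun x => (f x, (0 : Fin 1))) = fent p f :=
      fent_congr hp hne (fun x y => by simp [Prod.ext_iff])
    have e2 : fent p (fun _ : X => (0 : Fin 1)) = 0 := by
      unfold fent entv pushp
      simp [hp1]
    rw [e1, e2, sub_zero]
  calc fcond p f g ≤ fcond p f (fun x => (fun _ => (0:Fin 1)) (g x)) := h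
    _ = fent p f := h2

/-- nonnegativity of conditional entropy -/
lemma fcond_nonneg (hp : ∀ x, 0 ≤ p x) (f : X → D) (g : X → E) : 0 ≤ fcond p f g := by
  unfold fcond
  have : fent p g ≤ fent p (fun x => (f x, g x)) := by
    have := fent_comp_le hp (fun x => (f x, g x)) Prod.snd
    simpa using this
  linarith

/-- max entropy bound -/
lemma fent_le_log_card (hp : ∀ x, 0 ≤ p x) (hp1 : ∑ x, p x = 1) (f : X → D) :
    fent p f ≤ Real.log (Fintype.card D) := by
  classical
  set w : D → ℝ := pushp p f with hw
  set s : Finset D := Finset.univ.filter (fun d => 0 < w d) with hsdef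
  have hsub : ∀ d, d ∉ s → w d = 0 := fun d hd =>
    le_antisymm (not_lt.mp (by simpa [hsdef] using hd)) (pushp_nonneg hp f d)
  have hw1 : ∑ d ∈ s, w d = 1 := by
    rw [Finset.sum_subset (Finset.subset_univ s) (fun d _ hd => hsub d hd), hw, sum_pushp, hp1]
  have hent : fent p f = ∑ d ∈ s, w d * Real.log (w d)⁻¹ := by
    unfold fent entv
    rw [← Finset.sum_subset (Finset.subset_univ s)
      (fun d _ hd => by
        have h0 : pushp p f d = 0 := hsub d hd
        simp [h0, Real.negMulLog])]
    refine Finset.sum_congr rfl fun d _ => ?_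
    rw [Real.negMulLog, Real.log_inv]
    ring
  have hjen := jensen_log s w (fun d => (w d)⁻¹) (fun d _ => pushp_nonneg hp f d) hw1
    (fun d hd => inv_nonneg.mpr (pushp_nonneg hp f d))
    (fun d hd hpd => inv_pos.mpr hpd)
  have hsum : ∑ d ∈ s, w d * (w d)⁻¹ = (s.card : ℝ) := by
    rw [Finset.sum_congr rfl (fun d hd => ?_)]
    · rw [Finset.sum_const, nsmul_eq_mul, mul_one]
    · have : 0 < w d := by simpa [hsdef] using hd
      exact mul_inv_cancel₀ (ne_of_gt this)
  have hcard : (s.card : ℝ) ≤ (Fintype.card D : ℝ) := by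
    exact_mod_cast Finset.card_le_card (Finset.subset_univ s)
  have hspos : 0 < (s.card : ℝ) := by
    have : s.Nonempty := by
      by_contra hcon
      rw [Finset.not_nonempty_iff_eq_empty] at hcon
      rw [hcon] at hw1
      simp at hw1
    exact_mod_cast Finset.card_pos.mpr this
  calc fent p f = ∑ d ∈ s, w d * Real.log (w d)⁻¹ := hent
    _ ≤ Real.log (∑ d ∈ s, w d * (w d)⁻¹) := hjen
    _ = Real.log (s.card : ℝ) := by rw [hsum]
    _ ≤ Real.log (Fintype.card D : ℝ) := Real.log_le_log hspos hcard

section Chain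
variable {B : Type*} [Fintype B] {ι : Type*} [Fintype ι] [DecidableEq ι]

/-- main chain inequality -/
lemma fent_tuple_le (hp : ∀ x, 0 ≤ p x) (hp1 : ∑ x, p x = 1)
    (α β : ι → X → B) :
    fent p (fun x (i : ι) => α i x) ≤ fent p (fun x (i : ι) => β i x)
      + ∑ i, fcond p (α i) (β i) := by
  classical
  have hne : Nonempty X := by
    by_contra hcon
    rw [not_nonempty_iff] at hcon
    rw [Finset.univ_eq_empty, Finset.sum_empty] at hp1
    norm_num at hp1
  set βs : X → ι → B := fun x i => β i x with hβs
  have main : ∀ T : Finset ι,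
      fent p (fun x => ((fun i => if i ∈ T then some (α i x) else none), βs x))
        ≤ fent p βs + ∑ i ∈ T, fcond p (α i) (β i) := by
    intro T
    induction T using Finset.induction_on with
    | empty =>
        simp only [Finset.notMem_empty, if_false, Finset.sum_empty, add_zero]
        have : fent p (fun x => ((fun (_ : ι) => (none : Option B)), βs x))
            = fent p βs := fent_congr hp hne (fun x y => by simp [Prod.ext_iff])
        rw [this]
    | @insert i T hi IH =>
        have step1 : fent p (fun x => ((fun j => if j ∈ insert i T then some (α j x) else none),
            βs x)) = fent p (fun x => (α i x,
              ((fun j => if j ∈ T then some (α j x) else none), βs x))) := by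
          refine fent_congr hp hne (fun x y => ?_)
          simp only [Prod.ext_iff, funext_iff]
          constructor
          · rintro ⟨hu, hb⟩
            refine ⟨?_, fun j => ?_, hb⟩
            · have := hu i
              simp [Finset.mem_insert] at this
              exact this
            · have := hu j
              by_cases hj : j ∈ T
              · have hji : j ∈ insert i T := Finset.mem_insert_of_mem hj
                simp [hj, hji] at this ⊢
                exact this
              · by_cases hjeq : j = i
                · simp [hj]
                · have hji : j ∉ insert i T := by simp [Finset.mem_insert, hjeq, hj]
                  simp [hj, hji]
          · rintro ⟨ha, hu, hb⟩
            refine ⟨fun j => ?_, hb⟩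
            by_cases hjeq : j = i
            · subst hjeq
              simp [Finset.mem_insert, ha]
            · have := hu j
              by_cases hj : j ∈ T
              · have hji : j ∈ insert i T := Finset.mem_insert_of_mem hj
                simp [hj, hji] at this ⊢
                exact this
              · have hji : j ∉ insert i T := by simp [Finset.mem_insert, hjeq, hj]
                simp [hj, hji]
        have step2 : fent p (fun x => (α i x,
            ((fun j => if j ∈ T then some (α j x) else none), βs x)))
            = fent p (fun x => ((fun j => if j ∈ T then some (α j x) else none), βs x))
              + fcond p (α i) (fun x => ((fun j => if j ∈ T then some (α j x) else none),
                  βs x)) := by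
          unfold fcond
          ring
        have step3 : fcond p (α i) (fun x => ((fun j => if j ∈ T then some (α j x) else none),
            βs x)) ≤ fcond p (α i) (β i) := by
          have := fcond_comp_le hp hp1 (α i)
            (fun x => ((fun j => if j ∈ T then some (α j x) else none), βs x))
            (fun z => z.2 i)
          simpa [hβs] using this
        rw [step1, step2, Finset.sum_insert hi]
        linarith
  have final : fent p (fun x (i : ι) => α i x)
      ≤ fent p (fun x => ((fun i => if i ∈ (Finset.univ : Finset ι) then some (α i x)
          else none), βs x)) := by
    have hcomp := fent_comp_le hp
      (fun x => ((fun i => if i ∈ (Finset.univ : Finset ι) then some (α i x) else none), βs x))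
      (fun z (i : ι) => (z.1 i).getD (z.2 i))
    have heq : (fun x => (fun (i : ι) => ((if i ∈ (Finset.univ : Finset ι)
        then some (α i x) else none).getD (βs x i)))) = fun x (i : ι) => α i x := by
      funext x i
      simp
    calc fent p (fun x (i : ι) => α i x)
        = fent p (fun x (i : ι) => ((if i ∈ (Finset.univ : Finset ι)
            then some (α i x) else none).getD (βs x i))) := by rw [heq]
      _ ≤ _ := hcomp
  calc fent p (fun x (i : ι) => α i x)
      ≤ fent p (fun x => ((fun i => if i ∈ (Finset.univ : Finset ι) then some (α i x)
          else none), βs x)) := final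
    _ ≤ fent p βs + ∑ i ∈ Finset.univ, fcond p (α i) (β i) := main Finset.univ
    _ = fent p (fun x (i : ι) => β i x) + ∑ i, fcond p (α i) (β i) := by rw [hβs]

end Chain

section Gq
variable {B : Type*} [Fintype B] {C : Type*} [Fintype C]

noncomputable def margl (q : B × C → ℝ) (b : B) : ℝ := ∑ c, q (b, c)
noncomputable def margr (q : B × C → ℝ) (c : C) : ℝ := ∑ b, q (b, c)
noncomputable def Gquant (q : B × C → ℝ) : ℝ := 2 * entv q - entv (margl q) - entv (margr q)

lemma frok_eq_Gquant {X : Type*} [Fintype X] {p : X → ℝ} (hp : ∀ x, 0 ≤ p x)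
    (a : X → B) (b : X → C) :
    fcond p a b + fcond p b a = Gquant (pushp p (fun x => (a x, b x))) := by
  have hswap : fent p (fun x => (b x, a x)) = fent p (fun x => (a x, b x)) := by
    have h1 : fent p (fun x => Prod.swap ((a x, b x))) ≤ fent p (fun x => (a x, b x)) :=
      fent_comp_le hp _ Prod.swap
    have h2 : fent p (fun x => Prod.swap ((b x, a x))) ≤ fent p (fun x => (b x, a x)) :=
      fent_comp_le hp _ Prod.swap
    simp only [Prod.swap_prod_mk] at h1 h2
    linarith
  have hl : margl (pushp p (fun x => (a x, b x))) = pushp p a := by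
    funext b0
    exact sum_pushp_pair_left a b b0
  have hr : margr (pushp p (fun x => (a x, b x))) = pushp p b := by
    funext c0
    exact sum_pushp_pair_right a b c0
  unfold fcond Gquant
  rw [hswap, hl, hr]
  unfold fent
  ring

lemma continuous_entv {D : Type*} [Fintype D] : Continuous (entv : (D → ℝ) → ℝ) :=
  continuous_finset_sum _ (fun d _ => Real.continuous_negMulLog.comp (continuous_apply d))

lemma continuous_Gquant : Continuous (Gquant : (B × C → ℝ) → ℝ) := by
  unfold Gquant
  have hml : Continuous (margl : (B × C → ℝ) → (B → ℝ)) :=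
    continuous_pi fun b => continuous_finset_sum _ (fun cc _ => continuous_apply (b, cc))
  have hmr : Continuous (margr : (B × C → ℝ) → (C → ℝ)) :=
    continuous_pi fun cc => continuous_finset_sum _ (fun b _ => continuous_apply (b, cc))
  exact ((continuous_const.mul continuous_entv).sub (continuous_entv.comp hml)).sub
    (continuous_entv.comp hmr)

def simplexSet (D : Type*) [Fintype D] : Set (D → ℝ) := {q | (∀ d, 0 ≤ q d) ∧ ∑ d, q d = 1}

lemma isCompact_simplexSet {D : Type*} [Fintype D] : IsCompact (simplexSet D) := by
  have hsub : simplexSet D ⊆ Set.Icc (0 : D → ℝ) 1 := by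
    rintro q ⟨hq0, hq1⟩
    constructor
    · intro d; exact hq0 d
    · intro d
      calc q d ≤ ∑ e, q e := Finset.single_le_sum (fun e _ => hq0 e) (Finset.mem_univ d)
        _ = 1 := hq1
  have hclosed : IsClosed (simplexSet D) := by
    have h1 : IsClosed {q : D → ℝ | ∀ d, 0 ≤ q d} := by
      have : {q : D → ℝ | ∀ d, 0 ≤ q d} = ⋂ d, {q : D → ℝ | 0 ≤ q d} := by
        ext q; simp
      rw [this]
      exact isClosed_iInter fun d => isClosed_le continuous_const (continuous_apply d)
    have h2 : IsClosed {q : D → ℝ | ∑ d, q d = 1} :=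
      isClosed_eq (continuous_finset_sum _ fun d _ => continuous_apply d) continuous_const
    exact h1.inter h2
  exact isCompact_Icc.of_isClosed_subset hclosed hsub

lemma Gquant_uniform {ε : ℝ} (hε : 0 < ε) :
    ∃ δ > 0, ∀ q1 ∈ simplexSet (B × C), ∀ q2 ∈ simplexSet (B × C),
      (∀ z, |q1 z - q2 z| ≤ δ) → |Gquant q1 - Gquant q2| ≤ ε := by
  have huc : UniformContinuousOn (Gquant : (B × C → ℝ) → ℝ) (simplexSet (B × C)) :=
    isCompact_simplexSet.uniformContinuousOn_of_continuous continuous_Gquant.continuousOn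
  rw [Metric.uniformContinuousOn_iff] at huc
  obtain ⟨δ, hδ, hh⟩ := huc ε hε
  refine ⟨δ / 2, by positivity, fun q1 h1 q2 h2 hcl => ?_⟩
  have hdist : dist q1 q2 ≤ δ / 2 := by
    rw [dist_pi_le_iff (by positivity)]
    intro z
    rw [Real.dist_eq]
    exact hcl z
  have := hh q1 h1 q2 h2 (lt_of_le_of_lt hdist (by linarith))
  rw [Real.dist_eq] at this
  exact le_of_lt this

lemma pushp_dist_le {X : Type*} [Fintype X] (P P' : X → ℝ) (f : X → B) (b : B) :
    |pushp P f b - pushp P' f b| ≤ ∑ x, |P x - P' x| := by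
  classical
  unfold pushp
  rw [← Finset.sum_sub_distrib]
  refine le_trans (Finset.abs_sum_le_sum_abs _ _) (Finset.sum_le_sum fun x _ => ?_)
  split <;> simp [abs_nonneg]

end Gq

end FiniteEntropy
section Bridge
open MeasureTheory
variable {Y : Type*} [Fintype Y] [MeasurableSpace Y] [DiscreteMeasurableSpace Y]
  {B : Type*} [Fintype B] [MeasurableSpace B] [DiscreteMeasurableSpace B]
  {C : Type*} [Fintype C] [MeasurableSpace C] [DiscreteMeasurableSpace C]

lemma measure_eq_sum_ite (ν : Measure Y) (s : Set Y) [DecidablePred (· ∈ s)] :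
    ν s = ∑ y, if y ∈ s then ν {y} else 0 := by
  classical
  have hset : s = ⋃ y ∈ Finset.univ.filter (fun y => y ∈ s), ({y} : Set Y) := by
    ext z; simp
  conv_lhs => rw [hset]
  rw [measure_biUnion_finset]
  · rw [Finset.sum_filter]
  · intro a _ b _ hab
    simp only [Function.onFun]
    exact Set.disjoint_singleton.mpr hab
  · exact fun b _ => measurableSet_singleton b

lemma map_singleton_toReal (ν : Measure Y) [IsFiniteMeasure ν] (f : Y → B) (b : B) :
    ((ν.map f) {b}).toReal = pushp (fun y => (ν {y}).toReal) f b := by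
  classical
  rw [Measure.map_apply Measurable.of_discrete (measurableSet_singleton b)]
  have : (f ⁻¹' {b}) = {y | f y = b} := by ext y; simp
  rw [this, measure_eq_sum_ite ν {y | f y = b}]
  rw [ENNReal.toReal_sum (fun y _ => by split <;> simp [measure_ne_top ν])]
  unfold pushp
  refine Finset.sum_congr rfl fun y _ => ?_
  split <;> simp_all

lemma sum_pmf_eq_one (ν : Measure Y) [IsProbabilityMeasure ν] :
    ∑ y, ((ν {y}).toReal) = 1 := by
  classical
  have := measure_eq_sum_ite ν Set.univ
  simp only [Set.mem_univ, if_true] at this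
  rw [measure_univ] at this
  rw [← ENNReal.toReal_sum (fun y _ => measure_ne_top ν _), ← this]
  simp

lemma shannon_map_eq_fent (ν : Measure Y) [IsFiniteMeasure ν] (f : Y → B) :
    shannonEntropy (ν.map f) = fent (fun y => (ν {y}).toReal) f := by
  unfold shannonEntropy fent entv
  rw [← Finset.sum_neg_distrib]
  refine Finset.sum_congr rfl fun b _ => ?_
  rw [map_singleton_toReal ν f b, Real.negMulLog, neg_mul]

lemma rokDist_eq_fcond (ν : Measure Y) [IsProbabilityMeasure ν] (a : Y → B) (b : Y → C) :
    rokDist ν a b = fcond (fun y => (ν {y}).toReal) a b + fcond (fun y => (ν {y}).toReal) b a := by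
  unfold rokDist condEntropyObs obsEntropy fcond
  rw [shannon_map_eq_fent ν (fun y => (a y, b y)), shannon_map_eq_fent ν b,
    shannon_map_eq_fent ν (fun y => (b y, a y)), shannon_map_eq_fent ν a]

lemma tvDist_eq_sum (η₁ η₂ : Measure Y) :
    ∑ y, |(η₁ {y}).toReal - (η₂ {y}).toReal| = 2 * tvDist η₁ η₂ := by
  unfold tvDist
  ring

end Bridge

section KeyStep
open MeasureTheory Filter

lemma key_step {G : Type*} [Group G] [Countable G] [DecidableEq G]
    (V : ℕ → Type*) [∀ n, Fintype (V n)] [∀ n, DecidableEq (V n)]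
    (σ : ∀ n, G → Equiv.Perm (V n))
    (A B : Type*) [Fintype A] [MeasurableSpace A] [DiscreteMeasurableSpace A]
    [Fintype B] [MeasurableSpace B] [DiscreteMeasurableSpace B]
    (μ : Measure (G → A)) [IsProbabilityMeasure μ]
    (μn : ∀ n, Measure (V n → A)) (hμn : ∀ n, IsProbabilityMeasure (μn n))
    (hconv : LocalWeakStarConverges σ μn μ)
    (hcard : Tendsto (fun n => Fintype.card (V n)) atTop atTop)
    (F : Finset G) (θ : (↥F → A) → B) (F2 : Finset G) (θ2 : (↥F2 → A) → B)
    (c : ℝ) (hc : 0 < c) (S : ∀ n, Finset (V n))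
    (hS : ∀ n, c * (Fintype.card (V n) : ℝ) ≤ ((S n).card : ℝ))
    (ε : ℝ) (hε : 0 < ε) :
    ∀ᶠ n in atTop,
      (1 / ((S n).card : ℝ)) *
        |shannonEntropy (Measure.map (fun (b : V n → B) (s : ↥(S n)) => b s.1)
            (Measure.map (fun (x : V n → A) (v : V n) => θ (fun g : ↥F => x (σ n g.1 v)))
              (μn n)))
         - shannonEntropy (Measure.map (fun (b : V n → B) (s : ↥(S n)) => b s.1)
            (Measure.map (fun (x : V n → A) (v : V n) => θ2 (fun g : ↥F2 => x (σ n g.1 v)))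
              (μn n)))|
        ≤ rokDist μ (fun a => θ (fun g : ↥F => a g.1)) (fun a => θ2 (fun g : ↥F2 => a g.1))
            + ε := by
  classical
  -- nonemptiness
  have hGA : Nonempty (G → A) := by
    by_contra h
    rw [not_nonempty_iff] at h
    have h1 := measure_univ (μ := μ)
    rw [Set.univ_eq_empty_iff.mpr h, measure_empty] at h1
    simp at h1
  have hA : Nonempty A := ⟨hGA.some 1⟩
  have hB : Nonempty B := ⟨θ (fun _ => hA.some)⟩
  -- setup on the union window
  set F' : Finset G := F ∪ F2 with hF'
  set Θ1 : (↥F' → A) → B := fun y => θ (fun g => y ⟨g.1, Finset.mem_union_left _ g.2⟩)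
    with hΘ1
  set Θ2 : (↥F' → A) → B := fun y => θ2 (fun g => y ⟨g.1, Finset.mem_union_right _ g.2⟩)
    with hΘ2
  set ΘP : (↥F' → A) → B × B := fun y => (Θ1 y, Θ2 y) with hΘP
  set πY : (G → A) → (↥F' → A) := fun a g => a g.1 with hπY
  have hπYm : Measurable πY := measurable_pi_lambda _ (fun g => measurable_pi_apply g.1)
  set η : Measure (↥F' → A) := Measure.map πY μ with hη
  haveI : IsProbabilityMeasure η := Measure.isProbabilityMeasure_map hπYm.aemeasurable
  set pY : (↥F' → A) → ℝ := fun y => (η {y}).toReal with hpY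
  have hpY0 : ∀ y, 0 ≤ pY y := fun y => ENNReal.toReal_nonneg
  have hpY1 : ∑ y, pY y = 1 := sum_pmf_eq_one η
  set φ' : (G → A) → B := fun a => θ (fun g : ↥F => a g.1) with hφ'
  set ψ' : (G → A) → B := fun a => θ2 (fun g : ↥F2 => a g.1) with hψ'
  have hφΘ : φ' = fun a => Θ1 (πY a) := rfl
  have hψΘ : ψ' = fun a => Θ2 (πY a) := rfl
  set ρ : ℝ := rokDist μ φ' ψ' with hρ
  have hρfc : ρ = fcond pY Θ1 Θ2 + fcond pY Θ2 Θ1 := by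
    have hmap1 : Measure.map φ' μ = Measure.map Θ1 η := by
      rw [hη, Measure.map_map Measurable.of_discrete hπYm, hφΘ]
      rfl
    have hmap2 : Measure.map ψ' μ = Measure.map Θ2 η := by
      rw [hη, Measure.map_map Measurable.of_discrete hπYm, hψΘ]
      rfl
    have hmap3 : Measure.map (fun a => (φ' a, ψ' a)) μ
        = Measure.map (fun y => (Θ1 y, Θ2 y)) η := by
      rw [hη, Measure.map_map Measurable.of_discrete hπYm]
      rfl
    have hmap4 : Measure.map (fun a => (ψ' a, φ' a)) μ
        = Measure.map (fun y => (Θ2 y, Θ1 y)) η := by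
      rw [hη, Measure.map_map Measurable.of_discrete hπYm]
      rfl
    have : rokDist μ φ' ψ' = rokDist η Θ1 Θ2 := by
      unfold rokDist condEntropyObs obsEntropy
      rw [hmap1, hmap2, hmap3, hmap4]
    rw [hρ, this, rokDist_eq_fcond η Θ1 Θ2]
  have hρG : ρ = Gquant (pushp pY ΘP) := by
    rw [hρfc]
    exact frok_eq_Gquant hpY0 Θ1 Θ2
  have hρ0 : 0 ≤ ρ := by
    rw [hρfc]
    exact add_nonneg (fcond_nonneg hpY0 _ _) (fcond_nonneg hpY0 _ _)
  have hqμS : pushp pY ΘP ∈ simplexSet (B × B) :=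
    ⟨fun z => pushp_nonneg hpY0 _ _, by rw [sum_pushp, hpY1]⟩
  -- constants
  set L : ℝ := Real.log (Fintype.card B) with hLdef
  have hL : 0 ≤ L := Real.log_nonneg (by exact_mod_cast Fintype.card_pos)
  obtain ⟨δ₁, hδ₁, hUC⟩ := Gquant_uniform (B := B) (C := B) (half_pos hε)
  set δ : ℝ := min (δ₁ / 4) (c * ε / (2 * (2 * L + 1))) with hδdef
  have hδpos : 0 < δ := lt_min (by positivity) (by positivity)
  have hδ14 : δ ≤ δ₁ / 4 := min_le_left _ _
  have hδ2 : δ ≤ c * ε / (2 * (2 * L + 1)) := min_le_right _ _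
  -- eventual statements
  have hev1 := hconv F' δ hδpos
  have hev2 : ∀ᶠ n in atTop, 1 ≤ Fintype.card (V n) := hcard.eventually_ge_atTop 1
  filter_upwards [hev1, hev2] with n hn1 hn2
  -- fixed n
  haveI := hμn n
  have hVpos : (0 : ℝ) < (Fintype.card (V n) : ℝ) := by exact_mod_cast hn2
  have hSpos : (0 : ℝ) < ((S n).card : ℝ) := lt_of_lt_of_le (mul_pos hc hVpos) (hS n)
  set p : (V n → A) → ℝ := fun x => ((μn n) {x}).toReal with hpdef
  have hp0 : ∀ x, 0 ≤ p x := fun x => ENNReal.toReal_nonneg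
  have hp1 : ∑ x, p x = 1 := sum_pmf_eq_one (μn n)
  set α : ↥(S n) → (V n → A) → B := fun s x => θ (fun g : ↥F => x (σ n g.1 s.1)) with hα
  set β : ↥(S n) → (V n → A) → B := fun s x => θ2 (fun g : ↥F2 => x (σ n g.1 s.1)) with hβ
  -- identify the two entropies
  have hH1 : shannonEntropy (Measure.map (fun (b : V n → B) (s : ↥(S n)) => b s.1)
      (Measure.map (fun (x : V n → A) (v : V n) => θ (fun g : ↥F => x (σ n g.1 v))) (μn n)))
      = fent p (fun x (s : ↥(S n)) => α s x) := by
    rw [Measure.map_map Measurable.of_discrete Measurable.of_discrete]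
    exact shannon_map_eq_fent (μn n) _
  have hH2 : shannonEntropy (Measure.map (fun (b : V n → B) (s : ↥(S n)) => b s.1)
      (Measure.map (fun (x : V n → A) (v : V n) => θ2 (fun g : ↥F2 => x (σ n g.1 v))) (μn n)))
      = fent p (fun x (s : ↥(S n)) => β s x) := by
    rw [Measure.map_map Measurable.of_discrete Measurable.of_discrete]
    exact shannon_map_eq_fent (μn n) _
  rw [hH1, hH2]
  -- chain rule bound
  set R : ↥(S n) → ℝ := fun s => fcond p (α s) (β s) + fcond p (β s) (α s) with hR
  have habs : |fent p (fun x (s : ↥(S n)) => α s x) - fent p (fun x (s : ↥(S n)) => β s x)|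
      ≤ ∑ s, R s := by
    rw [abs_sub_le_iff]
    constructor
    · have h1 := fent_tuple_le hp0 hp1 α β
      have h2 : ∑ s, fcond p (α s) (β s) ≤ ∑ s, R s :=
        Finset.sum_le_sum fun s _ => by
          rw [hR]
          simp only
          nlinarith [fcond_nonneg hp0 (β s) (α s)]
      linarith
    · have h1 := fent_tuple_le hp0 hp1 β α
      have h2 : ∑ s, fcond p (β s) (α s) ≤ ∑ s, R s :=
        Finset.sum_le_sum fun s _ => by
          rw [hR]
          simp only
          nlinarith [fcond_nonneg hp0 (α s) (β s)]
      linarith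
  -- per-vertex analysis
  set good : V n → Prop := fun v =>
    tvDist (Measure.map (fun (x : V n → A) (g : ↥F') => x (σ n g.1 v)) (μn n))
      (Measure.map (fun (a : G → A) (g : ↥F') => a g.1) μ) < δ with hgood
  have hRgood : ∀ s : ↥(S n), good s.1 → R s ≤ ρ + ε / 2 := by
    intro s hgs
    set Pim : (V n → A) → (↥F' → A) := fun x g => x (σ n g.1 s.1) with hPim
    have hmapv : Measurable Pim := Measurable.of_discrete
    set ηv : Measure (↥F' → A) := Measure.map Pim (μn n) with hηv
    haveI : IsProbabilityMeasure ηv := Measure.isProbabilityMeasure_map hmapv.aemeasurable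
    set Pv : (↥F' → A) → ℝ := fun y => (ηv {y}).toReal with hPv
    have hPv0 : ∀ y, 0 ≤ Pv y := fun y => ENNReal.toReal_nonneg
    have hPv1 : ∑ y, Pv y = 1 := sum_pmf_eq_one ηv
    have hpair : (fun x => (α s x, β s x)) = fun x => ΘP (Pim x) := rfl
    have hRs : R s = Gquant (pushp Pv ΘP) := by
      rw [hR]
      simp only
      rw [frok_eq_Gquant hp0 (α s) (β s), hpair]
      have hcomp : pushp p (fun x => ΘP (Pim x)) = pushp (pushp p Pim) ΘP :=
        funext (fun z => pushp_comp Pim ΘP z)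
      rw [hcomp]
      congr 1
      have : pushp p Pim = Pv := by
        funext y
        exact (map_singleton_toReal (μn n) Pim y).symm
      rw [this]
    have hqvS : pushp Pv ΘP ∈ simplexSet (B × B) :=
      ⟨fun z => pushp_nonneg hPv0 _ _, by rw [sum_pushp, hPv1]⟩
    have hclose : ∀ z, |pushp Pv ΘP z - pushp pY ΘP z| ≤ δ₁ := by
      intro z
      refine le_trans (pushp_dist_le Pv pY ΘP z) ?_
      have h2tv : ∑ y, |Pv y - pY y| = 2 * tvDist ηv η := tvDist_eq_sum ηv η
      have hgs' : tvDist ηv η < δ := hgs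
      rw [h2tv]
      nlinarith
    have := hUC (pushp Pv ΘP) hqvS (pushp pY ΘP) hqμS hclose
    have habs2 : Gquant (pushp Pv ΘP) - Gquant (pushp pY ΘP) ≤ ε / 2 := by
      have := abs_le.mp this
      linarith [this.2]
    rw [hRs, hρG]
    linarith
  have hRbad : ∀ s : ↥(S n), R s ≤ 2 * L := by
    intro s
    have h1 : fcond p (α s) (β s) ≤ fent p (α s) := fcond_le_fent hp0 hp1 _ _
    have h2 : fcond p (β s) (α s) ≤ fent p (β s) := fcond_le_fent hp0 hp1 _ _
    have h3 : fent p (α s) ≤ L := fent_le_log_card hp0 hp1 (α s)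
    have h4 : fent p (β s) ≤ L := fent_le_log_card hp0 hp1 (β s)
    rw [hR]
    simp only
    linarith
  have hR0 : ∀ s : ↥(S n), 0 ≤ R s := fun s =>
    add_nonneg (fcond_nonneg hp0 _ _) (fcond_nonneg hp0 _ _)
  -- counting
  set TSg : Finset ↥(S n) := Finset.univ.filter (fun s => good s.1) with hTSg
  set TSb : Finset ↥(S n) := Finset.univ.filter (fun s => ¬ good s.1) with hTSb
  set Vb : Finset (V n) := Finset.univ.filter (fun v => ¬ good v) with hVb
  have hsplit : ∑ s, R s = ∑ s ∈ TSg, R s + ∑ s ∈ TSb, R s := by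
    rw [hTSg, hTSb]
    exact (Finset.sum_filter_add_sum_filter_not _ _ _).symm
  have hgsum : ∑ s ∈ TSg, R s ≤ ((S n).card : ℝ) * (ρ + ε / 2) := by
    calc ∑ s ∈ TSg, R s ≤ ∑ _s ∈ TSg, (ρ + ε / 2) :=
          Finset.sum_le_sum fun s hs => hRgood s (by simpa [hTSg] using hs)
      _ = (TSg.card : ℝ) * (ρ + ε / 2) := by rw [Finset.sum_const, nsmul_eq_mul]
      _ ≤ ((S n).card : ℝ) * (ρ + ε / 2) := by
          have hc1 : (TSg.card : ℝ) ≤ ((S n).card : ℝ) := by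
            have := Finset.card_le_card (Finset.subset_univ TSg)
            rw [Finset.card_univ, Fintype.card_coe] at this
            exact_mod_cast this
          nlinarith
  have hbadcount : (TSb.card : ℝ) ≤ δ * (Fintype.card (V n) : ℝ) := by
    have hinj : (TSb.card : ℕ) ≤ Vb.card := by
      refine Finset.card_le_card_of_injOn (fun s => s.1) (fun s hs => ?_) ?_
      · simp only [hTSb, Finset.mem_coe, Finset.mem_filter, Finset.mem_univ, true_and] at hs
        simp [hVb, hs]
      · intro a _ b _ hab
        exact Subtype.ext hab
    have hcount : ((1 - δ) * (Fintype.card (V n) : ℝ))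
        ≤ ((Finset.univ.filter (fun v => good v)).card : ℝ) := by
      refine le_trans hn1 (le_of_eq ?_)
      have h5 : Nat.card {v : V n // good v} = (Finset.univ.filter (fun v => good v)).card := by
        rw [Nat.card_eq_fintype_card, Fintype.card_subtype]
      exact_mod_cast h5
    have hpart : (Finset.univ.filter (fun v => good v)).card + Vb.card
        = Fintype.card (V n) := by
      rw [hVb, Finset.card_filter_add_card_filter_not, Finset.card_univ]
    have : (Vb.card : ℝ) ≤ δ * (Fintype.card (V n) : ℝ) := by
      have h1 : ((Finset.univ.filter (fun v => good v)).card : ℝ) + (Vb.card : ℝ)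
          = (Fintype.card (V n) : ℝ) := by exact_mod_cast hpart
      linarith
    exact le_trans (by exact_mod_cast hinj) this
  have hbsum : ∑ s ∈ TSb, R s ≤ (ε / 2) * ((S n).card : ℝ) := by
    have h1 : ∑ s ∈ TSb, R s ≤ (TSb.card : ℝ) * (2 * L) := by
      calc ∑ s ∈ TSb, R s ≤ ∑ _s ∈ TSb, (2 * L) := Finset.sum_le_sum fun s _ => hRbad s
        _ = (TSb.card : ℝ) * (2 * L) := by rw [Finset.sum_const, nsmul_eq_mul]
    have h2 : (TSb.card : ℝ) * (2 * L) ≤ δ * (Fintype.card (V n) : ℝ) * (2 * L) := by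
      nlinarith [hbadcount]
    have h3 : δ * (Fintype.card (V n) : ℝ) * (2 * L) ≤ (ε / 2) * ((S n).card : ℝ) := by
      have hVnn : (0:ℝ) ≤ (Fintype.card (V n) : ℝ) := le_of_lt hVpos
      have e1 : δ * (2 * (2 * L + 1)) ≤ c * ε := by
        rw [le_div_iff₀ (by positivity : (0:ℝ) < 2 * (2 * L + 1))] at hδ2
        exact hδ2
      have e2 : δ * (2 * L) ≤ c * ε / 2 := by nlinarith [hδpos]
      have e3 : (δ * (2 * L)) * (Fintype.card (V n) : ℝ)
          ≤ (c * ε / 2) * (Fintype.card (V n) : ℝ) := mul_le_mul_of_nonneg_right e2 hVnn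
      have e5 : (ε / 2) * (c * (Fintype.card (V n) : ℝ)) ≤ (ε / 2) * ((S n).card : ℝ) :=
        mul_le_mul_of_nonneg_left (hS n) (by positivity)
      calc δ * (Fintype.card (V n) : ℝ) * (2 * L)
          = (δ * (2 * L)) * (Fintype.card (V n) : ℝ) := by ring
        _ ≤ (c * ε / 2) * (Fintype.card (V n) : ℝ) := e3
        _ = (ε / 2) * (c * (Fintype.card (V n) : ℝ)) := by ring
        _ ≤ (ε / 2) * ((S n).card : ℝ) := e5
    linarith
  -- conclusion
  have htotal : |fent p (fun x (s : ↥(S n)) => α s x) - fent p (fun x (s : ↥(S n)) => β s x)|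
      ≤ ((S n).card : ℝ) * (ρ + ε) := by
    calc |_ - _| ≤ ∑ s, R s := habs
      _ = ∑ s ∈ TSg, R s + ∑ s ∈ TSb, R s := hsplit
      _ ≤ ((S n).card : ℝ) * (ρ + ε / 2) + (ε / 2) * ((S n).card : ℝ) :=
          add_le_add hgsum hbsum
      _ = ((S n).card : ℝ) * (ρ + ε) := by ring
  rw [one_div, inv_mul_le_iff₀ hSpos]
  rw [hρ, hφ', hψ'] at htotal
  linarith [htotal]
end KeyStep


theorem stmt8 {G : Type*} [Group G] [Countable G] [DecidableEq G]
    (V : ℕ → Type*) [∀ n, Fintype (V n)] [∀ n, DecidableEq (V n)]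
    (σ : ∀ n, G → Equiv.Perm (V n)) (hσ : IsSoficApprox σ)
    (A B : Type*) [Fintype A] [MeasurableSpace A] [DiscreteMeasurableSpace A]
    [Fintype B] [MeasurableSpace B] [DiscreteMeasurableSpace B]
    (μ : Measure (G → A)) [IsProbabilityMeasure μ]
    (hinv : ∀ g : G, Measure.map (fun (a : G → A) (k : G) => a (k * g)) μ = μ)
    (μn : ∀ n, Measure (V n → A)) (hμn : ∀ n, IsProbabilityMeasure (μn n))
    (hconv : LocalWeakStarConverges σ μn μ)
    -- the sequence of local observables `φ_m = θm m ∘ π_{Fm m} : A^G → B`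
    (Fm : ℕ → Finset G) (θm : ∀ m : ℕ, (↥(Fm m) → A) → B)
    (φm : ℕ → ((G → A) → B)) (hφm : ∀ m, φm m = fun a => θm m (fun g : ↥(Fm m) => a g.1))
    -- the local observable `φ = θ ∘ π_F : A^G → B`
    (F : Finset G) (θ : (↥F → A) → B)
    (φ : (G → A) → B) (hφ : φ = fun a => θ (fun g : ↥F => a g.1))
    (c : ℝ) (hc : 0 < c)
    (S : ∀ n, Finset (V n)) (hS : ∀ n, c * (Fintype.card (V n) : ℝ) ≤ ((S n).card : ℝ)) :
    ∃ m : ℕ → ℕ, (∀ n, 1 ≤ m n) ∧ Monotone m ∧ Tendsto m atTop atTop ∧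
      ∀ ε : ℝ, 0 < ε → ∀ᶠ n in atTop,
        (1 / ((S n).card : ℝ)) *
            |shannonEntropy (Measure.map (fun (b : V n → B) (s : ↥(S n)) => b s.1)
                (Measure.map (fun (x : V n → A) (v : V n) => θ (fun g : ↥F => x (σ n g.1 v)))
                  (μn n))) -
              shannonEntropy (Measure.map (fun (b : V n → B) (s : ↥(S n)) => b s.1)
                (Measure.map
                  (fun (x : V n → A) (v : V n) =>
                    θm (m n) (fun g : ↥(Fm (m n)) => x (σ n g.1 v)))
                  (μn n)))| ≤
          rokDist μ φ (φm (m n)) + ε := by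
  classical
  have key : ∀ m : ℕ, ∀ᶠ n in atTop,
      (1 / ((S n).card : ℝ)) *
          |shannonEntropy (Measure.map (fun (b : V n → B) (s : ↥(S n)) => b s.1)
              (Measure.map (fun (x : V n → A) (v : V n) => θ (fun g : ↥F => x (σ n g.1 v)))
                (μn n))) -
            shannonEntropy (Measure.map (fun (b : V n → B) (s : ↥(S n)) => b s.1)
              (Measure.map
                (fun (x : V n → A) (v : V n) =>
                  θm m (fun g : ↥(Fm m) => x (σ n g.1 v)))
                (μn n)))| ≤
        rokDist μ φ (φm m) + 1 / ((m : ℝ) + 1) := by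
    intro m
    have h := key_step V σ A B μ μn hμn hconv hσ.1 F θ (Fm m) (θm m) c hc S hS
      (1 / ((m : ℝ) + 1)) (by positivity)
    rw [← hφ, ← hφm m] at h
    exact h
  choose N hN using fun m => eventually_atTop.mp (key m)
  set N' : ℕ → ℕ := fun m => m + (Finset.range (m + 1)).sup N with hN'def
  have hN'mono : Monotone N' := by
    intro a b hab
    refine add_le_add hab (Finset.sup_mono ?_)
    intro x hx
    simp only [Finset.mem_range] at hx ⊢
    omega
  have hN'ge : ∀ m, N m ≤ N' m := fun m =>
    le_trans (Finset.le_sup (Finset.mem_range.mpr (Nat.lt_succ_self m))) (Nat.le_add_left _ _)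
  set sfin : ℕ → Finset ℕ := fun n => (Finset.range (n + 1)).filter
    (fun m => 1 ≤ m ∧ N' m ≤ n) with hsfin
  have hsub : ∀ {n n' : ℕ}, n ≤ n' → sfin n ⊆ sfin n' := by
    intro n n' hnn' m hm
    simp only [hsfin, Finset.mem_filter, Finset.mem_range] at hm ⊢
    exact ⟨by omega, hm.2.1, le_trans hm.2.2 hnn'⟩
  set mfun : ℕ → ℕ := fun n => if h : (sfin n).Nonempty then (sfin n).max' h else 1
    with hmfun
  have hm1 : ∀ n, 1 ≤ mfun n := by
    intro n
    rw [hmfun]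
    dsimp only
    split
    · rename_i h
      have := (sfin n).max'_mem h
      simp only [hsfin, Finset.mem_filter] at this
      exact this.2.1
    · exact le_refl 1
  have hmono : Monotone mfun := by
    intro a b hab
    rw [hmfun]
    dsimp only
    split
    · rename_i h
      have hb : (sfin b).Nonempty := h.mono (hsub hab)
      rw [dif_pos hb]
      exact Finset.max'_subset h (hsub hab)
    · rename_i h
      exact le_trans (le_refl 1) (hm1 b)
  have hmem : ∀ n, mfun n = 1 ∨ mfun n ∈ sfin n := by
    intro n
    rw [hmfun]
    dsimp only
    split
    · rename_i h
      exact Or.inr ((sfin n).max'_mem h)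
    · exact Or.inl rfl
  have htend : Tendsto mfun atTop atTop := by
    rw [tendsto_atTop]
    intro M
    rw [eventually_atTop]
    refine ⟨max (N' (M + 1)) (M + 1), fun n hn => ?_⟩
    have h1 : N' (M + 1) ≤ n := le_trans (le_max_left _ _) hn
    have h2 : M + 1 ≤ n := le_trans (le_max_right _ _) hn
    have hmm : M + 1 ∈ sfin n := by
      simp only [hsfin, Finset.mem_filter, Finset.mem_range]
      exact ⟨by omega, by omega, h1⟩
    have hne : (sfin n).Nonempty := ⟨M + 1, hmm⟩
    have : M + 1 ≤ mfun n := by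
      rw [hmfun]
      dsimp only
      rw [dif_pos hne]
      exact Finset.le_max' _ _ hmm
    omega
  refine ⟨mfun, hm1, hmono, htend, ?_⟩
  intro ε hε
  obtain ⟨M, hM⟩ := exists_nat_one_div_lt hε
  have hev : ∀ᶠ n in atTop, (M + 2 : ℕ) ≤ mfun n := htend.eventually_ge_atTop (M + 2)
  filter_upwards [hev] with n hn
  have hne1 : mfun n ≠ 1 := by omega
  have hmemn : mfun n ∈ sfin n := (hmem n).resolve_left hne1
  have hcond : N' (mfun n) ≤ n := by
    simp only [hsfin, Finset.mem_filter, Finset.mem_range] at hmemn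
    exact hmemn.2.2
  have hQ := hN (mfun n) n (le_trans (hN'ge _) hcond)
  refine le_trans hQ (add_le_add_right ?_ _)
  have hfrac : 1 / ((mfun n : ℝ) + 1) ≤ 1 / ((M : ℝ) + 1) := by
    apply one_div_le_one_div_of_le (by positivity)
    have : (M : ℝ) ≤ (mfun n : ℝ) := by exact_mod_cast (by omega : M ≤ mfun n)
    linarith
  linarith [hM]
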